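/- arXiv:1504.06160 — 3 statements merged into one kernel-verified Lean document; each statement's English description precedes it below -/
import Mathlib

section
/- Let A be a k-algebra with a Nakayama automorphism μ (i.e., Ext^d_{A^e}(A, A^e) ≅ the twisted bimodule ^1A^μ as left A^e-modules, and Ext^i vanishes for i ≠ d). Then μ(z) = z for every central element z of A. -/
set_option maxHeartbeats 1000000
set_option synthInstance.maxHeartbeats 400000
open CategoryTheory TensorProduct

noncomputable section

variable {k : Type} [Field k] {R : Type} [Ring R] [Algebra k R]

def smulHom (c : R) (hc : ∀ x : R, c * x = x * c) (X : ModuleCat R) : X ⟶ X :=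
  ModuleCat.ofHom
  { toFun := fun m => c • m
    map_add' := fun a b => smul_add c a b
    map_smul' := fun r m => by
      simp only [RingHom.id_apply]
      rw [← mul_smul, hc, mul_smul] }

@[simp] lemma smulHom_apply (c : R) (hc : ∀ x : R, c * x = x * c) (X : ModuleCat R) (m : X) :
    smulHom c hc X m = c • m := rfl

lemma comp_smulHom (c : R) (hc : ∀ x : R, c * x = x * c) {X N : ModuleCat R} (u : X ⟶ N)
    (f g : N ⟶ N) (hfg : ∀ x : N, f x = g x + c • x) :
    u ≫ f = u ≫ g + smulHom c hc X ≫ u := by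
  ext m
  change f (u m) = g (u m) + u (c • m)
  rw [map_smul]
  exact hfg (u m)

theorem ext_map_eq (c : R) (hc : ∀ x : R, c * x = x * c)
    (M : ModuleCat R) (hM : ∀ m : M, c • m = 0) (n : ℕ)
    (N : ModuleCat R) (f g : N ⟶ N) (hfg : ∀ x : N, f x = g x + c • x) :
    ((Ext k (ModuleCat R) n).obj (Opposite.op M)).map f
      = ((Ext k (ModuleCat R) n).obj (Opposite.op M)).map g := by
  change ((NatTrans.leftDerived (NatTrans.rightOp ((linearYoneda k (ModuleCat R)).map f)) n).app
      M).unop = ((NatTrans.leftDerived (NatTrans.rightOp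
        ((linearYoneda k (ModuleCat R)).map g)) n).app M).unop
  congr 1
  let P : ProjectiveResolution M := ProjectiveResolution.of M
  rw [ProjectiveResolution.leftDerived_app_eq _ P n,
    ProjectiveResolution.leftDerived_app_eq _ P n]
  congr 1
  -- the chain map γ: scalar multiplication by c
  let γ : P.complex ⟶ P.complex :=
    { f := fun i => smulHom c hc _
      comm' := by
        intro i j _
        ext x
        change (P.complex.d i j) (c • x) = c • ((P.complex.d i j) x)
        exact ((P.complex.d i j).hom.map_smul c x) }
  have hγπ : γ ≫ P.π = 0 := by
    apply HomologicalComplex.to_single_hom_ext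
    rw [HomologicalComplex.comp_f, HomologicalComplex.zero_f]
    ext x
    change (P.π.f 0) (c • x) = 0
    rw [(P.π.f 0).hom.map_smul]
    exact hM _
  let h0 : Homotopy γ 0 := ProjectiveResolution.liftHomotopyZero γ hγπ
  set Gop := ((linearYoneda k (ModuleCat R)).obj N).rightOp with hGop
  have hx : (NatTrans.mapHomologicalComplex
        (NatTrans.rightOp ((linearYoneda k (ModuleCat R)).map f))
        (ComplexShape.down ℕ)).app P.complex =
      (NatTrans.mapHomologicalComplex
        (NatTrans.rightOp ((linearYoneda k (ModuleCat R)).map g))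
        (ComplexShape.down ℕ)).app P.complex +
      (Gop.mapHomologicalComplex (ComplexShape.down ℕ)).map γ := by
    apply HomologicalComplex.hom_ext
    intro i
    rw [HomologicalComplex.add_f_apply]
    apply Quiver.Hom.unop_inj
    rw [unop_add]
    apply ModuleCat.hom_ext
    apply LinearMap.ext
    intro u
    simp only [NatTrans.mapHomologicalComplex_app_f, Functor.mapHomologicalComplex_obj_X,
      NatTrans.rightOp_app, Quiver.Hom.unop_op, Functor.mapHomologicalComplex_map_f,
      Functor.rightOp_map, linearYoneda, LinearMap.add_apply]
    exact comp_smulHom c hc u f g hfg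
  rw [hx, Functor.map_add]
  have hzero : (HomologicalComplex.homologyFunctor (ModuleCat k)ᵒᵖ
      (ComplexShape.down ℕ) n).map
      ((Gop.mapHomologicalComplex (ComplexShape.down ℕ)).map γ) = 0 := by
    have h2 := (Gop.mapHomotopy h0).homologyMap_eq n
    simp only [Functor.map_zero, HomologicalComplex.homologyMap_zero] at h2
    exact h2
  rw [hzero, add_zero]


/-- let `A` be a `k`-algebra with a Nakayama automorphism `μ`, i.e. there is `d`
with `Ext^d_{A^e}(A, A^e) ≅ ¹A^μ` as left `A^e`-modules and `Ext^i_{A^e}(A, A^e) = 0` for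
`i ≠ d`.  Here `A^e = A ⊗[k] Aᵐᵒᵖ`, `A` is an `A^e`-module via `(a ⊗ bᵒᵖ) • m = a m b`, the
`A^e`-module structure on `Ext` is induced functorially by right multiplications of `A^e` on
itself, and the twisted module `¹A^μ` has action `(a ⊗ bᵒᵖ) • m = a · m · μ b`.  Then
`μ z = z` for every central element `z` of `A`. -/
theorem stmt0 (k : Type) [Field k] (A : Type) [Ring A] [Algebra k A]
    (μ : A ≃ₐ[k] A) (d : ℕ) :
    letI : Module (A ⊗[k] Aᵐᵒᵖ) A := TensorProduct.Algebra.module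
    ∀ (e : (((Ext k (ModuleCat (A ⊗[k] Aᵐᵒᵖ)) d).obj
          (Opposite.op (ModuleCat.of (A ⊗[k] Aᵐᵒᵖ) A))).obj
          (ModuleCat.of (A ⊗[k] Aᵐᵒᵖ) (A ⊗[k] Aᵐᵒᵖ))) ≃ₗ[k] A),
      (∀ (a b : A)
        (f : ModuleCat.of (A ⊗[k] Aᵐᵒᵖ) (A ⊗[k] Aᵐᵒᵖ) ⟶
          ModuleCat.of (A ⊗[k] Aᵐᵒᵖ) (A ⊗[k] Aᵐᵒᵖ)),
        (∀ x : A ⊗[k] Aᵐᵒᵖ, f x = x * (a ⊗ₜ[k] MulOpposite.op b)) →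
          ∀ ξ, e ((((Ext k (ModuleCat (A ⊗[k] Aᵐᵒᵖ)) d).obj
              (Opposite.op (ModuleCat.of (A ⊗[k] Aᵐᵒᵖ) A))).map f) ξ) = b * e ξ * μ a) →
      (∀ i : ℕ, i ≠ d →
        Subsingleton (((Ext k (ModuleCat (A ⊗[k] Aᵐᵒᵖ)) i).obj
          (Opposite.op (ModuleCat.of (A ⊗[k] Aᵐᵒᵖ) A))).obj
          (ModuleCat.of (A ⊗[k] Aᵐᵒᵖ) (A ⊗[k] Aᵐᵒᵖ)))) →
      ∀ z : A, (∀ y : A, z * y = y * z) → μ z = z := by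
  letI : Module (A ⊗[k] Aᵐᵒᵖ) A := TensorProduct.Algebra.module
  intro e h1 _h2 z hz
  have hzop : ∀ b : Aᵐᵒᵖ, MulOpposite.op z * b = b * MulOpposite.op z := by
    intro b
    rw [← MulOpposite.op_unop b, ← MulOpposite.op_mul, ← MulOpposite.op_mul, hz]
  have hc1 : ∀ x : A ⊗[k] Aᵐᵒᵖ,
      (z ⊗ₜ[k] MulOpposite.op (1 : A)) * x = x * (z ⊗ₜ[k] MulOpposite.op (1 : A)) := by
    intro x
    induction x using TensorProduct.induction_on with
    | zero => rw [mul_zero, zero_mul]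
    | tmul a b =>
      rw [Algebra.TensorProduct.tmul_mul_tmul, Algebra.TensorProduct.tmul_mul_tmul,
        MulOpposite.op_one, one_mul, mul_one, hz]
    | add x y hx hy => rw [mul_add, add_mul, hx, hy]
  have hc2 : ∀ x : A ⊗[k] Aᵐᵒᵖ,
      ((1 : A) ⊗ₜ[k] MulOpposite.op z) * x = x * ((1 : A) ⊗ₜ[k] MulOpposite.op z) := by
    intro x
    induction x using TensorProduct.induction_on with
    | zero => rw [mul_zero, zero_mul]
    | tmul a b =>
      rw [Algebra.TensorProduct.tmul_mul_tmul, Algebra.TensorProduct.tmul_mul_tmul,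
        one_mul, mul_one, hzop]
    | add x y hx hy => rw [mul_add, add_mul, hx, hy]
  have hc : ∀ x : A ⊗[k] Aᵐᵒᵖ,
      (z ⊗ₜ[k] MulOpposite.op (1 : A) - (1 : A) ⊗ₜ[k] MulOpposite.op z) * x
        = x * (z ⊗ₜ[k] MulOpposite.op (1 : A) - (1 : A) ⊗ₜ[k] MulOpposite.op z) := by
    intro x
    rw [sub_mul, mul_sub, hc1, hc2]
  have hM : ∀ m : A,
      (z ⊗ₜ[k] MulOpposite.op (1 : A) - (1 : A) ⊗ₜ[k] MulOpposite.op z) • m = 0 := by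
    intro m
    rw [sub_smul, TensorProduct.Algebra.smul_def, TensorProduct.Algebra.smul_def]
    show z • ((MulOpposite.op (1 : A)) • m) - (1 : A) • ((MulOpposite.op z) • m) = 0
    rw [MulOpposite.smul_eq_mul_unop, MulOpposite.smul_eq_mul_unop, MulOpposite.unop_op,
      MulOpposite.unop_op, mul_one, one_smul, smul_eq_mul, hz, sub_self]
  let f : ModuleCat.of (A ⊗[k] Aᵐᵒᵖ) (A ⊗[k] Aᵐᵒᵖ) ⟶ ModuleCat.of (A ⊗[k] Aᵐᵒᵖ) (A ⊗[k] Aᵐᵒᵖ) :=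
    ModuleCat.ofHom
    { toFun := fun x => x * (z ⊗ₜ[k] MulOpposite.op (1 : A))
      map_add' := fun a b => add_mul a b _
      map_smul' := fun r x => by simp only [RingHom.id_apply, smul_eq_mul, mul_assoc] }
  let g : ModuleCat.of (A ⊗[k] Aᵐᵒᵖ) (A ⊗[k] Aᵐᵒᵖ) ⟶ ModuleCat.of (A ⊗[k] Aᵐᵒᵖ) (A ⊗[k] Aᵐᵒᵖ) :=
    ModuleCat.ofHom
    { toFun := fun x => x * ((1 : A) ⊗ₜ[k] MulOpposite.op z)
      map_add' := fun a b => add_mul a b _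
      map_smul' := fun r x => by simp only [RingHom.id_apply, smul_eq_mul, mul_assoc] }
  have hf : ∀ x : A ⊗[k] Aᵐᵒᵖ, f x = x * (z ⊗ₜ[k] MulOpposite.op (1 : A)) := fun x => rfl
  have hg : ∀ x : A ⊗[k] Aᵐᵒᵖ, g x = x * ((1 : A) ⊗ₜ[k] MulOpposite.op z) := fun x => rfl
  have hfg0 : ∀ x : A ⊗[k] Aᵐᵒᵖ,
      x * (z ⊗ₜ[k] MulOpposite.op (1 : A)) = x * ((1 : A) ⊗ₜ[k] MulOpposite.op z)
      + (z ⊗ₜ[k] MulOpposite.op (1 : A) - (1 : A) ⊗ₜ[k] MulOpposite.op z) * x := by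
    intro x
    rw [hc, mul_sub, add_comm, sub_add_cancel]
  have hfg : ∀ x : (ModuleCat.of (A ⊗[k] Aᵐᵒᵖ) (A ⊗[k] Aᵐᵒᵖ) : Type),
      f x = g x + (z ⊗ₜ[k] MulOpposite.op (1 : A) - (1 : A) ⊗ₜ[k] MulOpposite.op z) • x :=
    fun x => hfg0 x
  have key := ext_map_eq (k := k)
    (z ⊗ₜ[k] MulOpposite.op (1 : A) - (1 : A) ⊗ₜ[k] MulOpposite.op z) hc
    (ModuleCat.of (A ⊗[k] Aᵐᵒᵖ) A) hM d (ModuleCat.of (A ⊗[k] Aᵐᵒᵖ) (A ⊗[k] Aᵐᵒᵖ)) f g hfg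
  have h1f := h1 z 1 f hf (e.symm 1)
  have h1g := h1 1 z g hg (e.symm 1)
  rw [key] at h1f
  rw [h1f, e.apply_symm_apply] at h1g
  simp only [map_one, mul_one, one_mul] at h1g
  exact h1g

end
end

section
/- In the homogenization H of U = k⟨x₁,x₂⟩/(x₁x₂ − qx₂x₁ + ax₁ + bx₂ + c), namely H = k⟨x₁,x₂,t⟩/(x₁x₂ − qx₂x₁ + ax₁t + bx₂t + ct², x₁t − tx₁, x₂t − tx₂), the element t is central, and the assignment x₁ ↦ qx₁ − bt, x₂ ↦ q⁻¹x₂ + q⁻¹at, t ↦ t extends to a graded algebra automorphism of H. -/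
/-- The defining relations of the homogenization
`H = k⟨x₁,x₂,t⟩/(x₁x₂ − qx₂x₁ + ax₁t + bx₂t + ct², x₁t − tx₁, x₂t − tx₂)`,
with generators `x₁ = ι 0`, `x₂ = ι 1`, `t = ι 2`. -/
def qPlaneHomogRel (k : Type*) [Field k] (q a b c : k) :
    FreeAlgebra k (Fin 3) → FreeAlgebra k (Fin 3) → Prop := fun u v =>
  (u = FreeAlgebra.ι k 0 * FreeAlgebra.ι k 1 - q • (FreeAlgebra.ι k 1 * FreeAlgebra.ι k 0) +
        a • (FreeAlgebra.ι k 0 * FreeAlgebra.ι k 2) + b • (FreeAlgebra.ι k 1 * FreeAlgebra.ι k 2) +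
        c • (FreeAlgebra.ι k 2 * FreeAlgebra.ι k 2) ∧ v = 0) ∨
  (u = FreeAlgebra.ι k 0 * FreeAlgebra.ι k 2 - FreeAlgebra.ι k 2 * FreeAlgebra.ι k 0 ∧ v = 0) ∨
  (u = FreeAlgebra.ι k 1 * FreeAlgebra.ι k 2 - FreeAlgebra.ι k 2 * FreeAlgebra.ι k 1 ∧ v = 0)

/-- The degree-`n` graded piece of `H`: the image of the span of length-`n` words. -/
noncomputable def qPlaneHomogPiece (k : Type*) [Field k] (q a b c : k) (n : ℕ) :
    Submodule k (RingQuot (qPlaneHomogRel k q a b c)) :=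
  Submodule.map (RingQuot.mkAlgHom k (qPlaneHomogRel k q a b c)).toLinearMap
    ((Submodule.span k (Set.range (FreeAlgebra.ι k : Fin 3 → FreeAlgebra k (Fin 3)))) ^ n)


section Stmt7Aux

variable {k A : Type*} [Field k] [Ring A] [Algebra k A]

lemma stmt7_key1 (q a b c : k) (hq : q ≠ 0)
    (X Y T : A) (hXT : X*T = T*X) (hYT : Y*T = T*Y)
    (hr : X*Y - q•(Y*X) + a•(X*T) + b•(Y*T) + c•(T*T) = 0) :
    (q•X - b•T)*(q⁻¹•Y + (q⁻¹*a)•T) - q•((q⁻¹•Y + (q⁻¹*a)•T)*(q•X - b•T))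
      + a•((q•X - b•T)*T) + b•((q⁻¹•Y + (q⁻¹*a)•T)*T) + c•(T*T) = 0 := by
  have hXY : X*Y = q•(Y*X) - a•(X*T) - b•(Y*T) - c•(T*T) := by
    linear_combination (norm := module) hr
  simp only [mul_add, add_mul, sub_mul, mul_sub, smul_mul_assoc, mul_smul_comm, smul_smul,
    smul_add, smul_sub]
  simp only [show T*X = X*T from hXT.symm, show T*Y = Y*T from hYT.symm, hXY]
  match_scalars <;> field_simp <;> ring

lemma stmt7_key2 (q a b c : k) (hq : q ≠ 0)
    (X Y T : A) (hXT : X*T = T*X) (hYT : Y*T = T*Y)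
    (hr : X*Y - q•(Y*X) + a•(X*T) + b•(Y*T) + c•(T*T) = 0) :
    (q⁻¹•X + (q⁻¹*b)•T)*(q•Y - a•T) - q•((q•Y - a•T)*(q⁻¹•X + (q⁻¹*b)•T))
      + a•((q⁻¹•X + (q⁻¹*b)•T)*T) + b•((q•Y - a•T)*T) + c•(T*T) = 0 := by
  have hXY : X*Y = q•(Y*X) - a•(X*T) - b•(Y*T) - c•(T*T) := by
    linear_combination (norm := module) hr
  simp only [mul_add, add_mul, sub_mul, mul_sub, smul_mul_assoc, mul_smul_comm, smul_smul,
    smul_add, smul_sub]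
  simp only [show T*X = X*T from hXT.symm, show T*Y = Y*T from hYT.symm, hXY]
  match_scalars <;> field_simp <;> ring

lemma stmt7_comm1 (r s : k) (X T : A) (hXT : X*T = T*X) :
    (r•X + s•T)*T - T*(r•X + s•T) = 0 := by
  rw [sub_eq_zero]
  simp only [add_mul, mul_add, smul_mul_assoc, mul_smul_comm, hXT]

lemma stmt7_comm1' (r s : k) (X T : A) (hXT : X*T = T*X) :
    (r•X - s•T)*T - T*(r•X - s•T) = 0 := by
  rw [sub_eq_zero]
  simp only [sub_mul, mul_sub, smul_mul_assoc, mul_smul_comm, hXT]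

end Stmt7Aux

/-- in the homogenization `H` of `U = k⟨x₁,x₂⟩/(x₁x₂ − qx₂x₁ + ax₁ + bx₂ + c)`,
the element `t` is central, and `x₁ ↦ qx₁ − bt`, `x₂ ↦ q⁻¹x₂ + q⁻¹at`, `t ↦ t` extends to a
graded algebra automorphism of `H`. -/
theorem stmt7 (k : Type*) [Field k] [IsAlgClosed k] [CharZero k]
    (q a b c : k) (hq0 : q ≠ 0) (hq1 : q ≠ 1) :
    (∀ h : RingQuot (qPlaneHomogRel k q a b c),
      RingQuot.mkAlgHom k _ (FreeAlgebra.ι k 2) * h =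
        h * RingQuot.mkAlgHom k _ (FreeAlgebra.ι k 2)) ∧
    ∃ φ : RingQuot (qPlaneHomogRel k q a b c) ≃ₐ[k] RingQuot (qPlaneHomogRel k q a b c),
      φ (RingQuot.mkAlgHom k _ (FreeAlgebra.ι k 0)) =
        q • RingQuot.mkAlgHom k _ (FreeAlgebra.ι k 0) -
          b • RingQuot.mkAlgHom k _ (FreeAlgebra.ι k 2) ∧
      φ (RingQuot.mkAlgHom k _ (FreeAlgebra.ι k 1)) =
        q⁻¹ • RingQuot.mkAlgHom k _ (FreeAlgebra.ι k 1) +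
          (q⁻¹ * a) • RingQuot.mkAlgHom k _ (FreeAlgebra.ι k 2) ∧
      φ (RingQuot.mkAlgHom k _ (FreeAlgebra.ι k 2)) =
        RingQuot.mkAlgHom k _ (FreeAlgebra.ι k 2) ∧
      (∀ n, Submodule.map φ.toLinearMap (qPlaneHomogPiece k q a b c n) ≤
        qPlaneHomogPiece k q a b c n) ∧
      (∀ n, Submodule.map φ.symm.toLinearMap (qPlaneHomogPiece k q a b c n) ≤
        qPlaneHomogPiece k q a b c n) := by
  classical
  set R := qPlaneHomogRel k q a b c with hRdef
  set mk : FreeAlgebra k (Fin 3) →ₐ[k] RingQuot R := RingQuot.mkAlgHom k R with hmk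
  set X : RingQuot R := mk (FreeAlgebra.ι k 0) with hX
  set Y : RingQuot R := mk (FreeAlgebra.ι k 1) with hY
  set T : RingQuot R := mk (FreeAlgebra.ι k 2) with hT
  have hrel : ∀ u v, R u v → mk u = mk v := fun u v h => RingQuot.mkAlgHom_rel k h
  have hr : X*Y - q•(Y*X) + a•(X*T) + b•(Y*T) + c•(T*T) = 0 := by
    have h0 := hrel _ _ (Or.inl ⟨rfl, rfl⟩)
    simpa only [map_add, map_sub, map_smul, map_mul, map_zero] using h0
  have hXT : X*T = T*X := by
    have h0 := hrel _ _ (Or.inr (Or.inl ⟨rfl, rfl⟩))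
    rw [map_sub, map_zero, sub_eq_zero] at h0
    simpa only [map_mul] using h0
  have hYT : Y*T = T*Y := by
    have h0 := hrel _ _ (Or.inr (Or.inr ⟨rfl, rfl⟩))
    rw [map_sub, map_zero, sub_eq_zero] at h0
    simpa only [map_mul] using h0
  -- centrality of T
  have central : ∀ x : FreeAlgebra k (Fin 3), T * mk x = mk x * T := by
    intro x
    induction x using FreeAlgebra.induction with
    | grade0 r => rw [AlgHom.commutes]; exact (Algebra.commutes r T).symm
    | grade1 i =>
        fin_cases i
        · exact hXT.symm
        · exact hYT.symm
        · rfl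
    | mul x y hx hy => rw [map_mul, ← mul_assoc, hx, mul_assoc, hy, mul_assoc]
    | add x y hx hy => rw [map_add, mul_add, add_mul, hx, hy]
  refine ⟨fun h => ?_, ?_⟩
  · obtain ⟨x, rfl⟩ := RingQuot.mkAlgHom_surjective k R h
    exact central x
  -- the endomorphisms
  set F : FreeAlgebra k (Fin 3) →ₐ[k] RingQuot R :=
    FreeAlgebra.lift k ![q•X - b•T, q⁻¹•Y + (q⁻¹*a)•T, T] with hF
  set G : FreeAlgebra k (Fin 3) →ₐ[k] RingQuot R :=
    FreeAlgebra.lift k ![q⁻¹•X + (q⁻¹*b)•T, q•Y - a•T, T] with hG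
  have hF0 : F (FreeAlgebra.ι k 0) = q•X - b•T := by
    rw [hF, FreeAlgebra.lift_ι_apply]; rfl
  have hF1 : F (FreeAlgebra.ι k 1) = q⁻¹•Y + (q⁻¹*a)•T := by
    rw [hF, FreeAlgebra.lift_ι_apply]; rfl
  have hF2 : F (FreeAlgebra.ι k 2) = T := by
    rw [hF, FreeAlgebra.lift_ι_apply]; rfl
  have hG0 : G (FreeAlgebra.ι k 0) = q⁻¹•X + (q⁻¹*b)•T := by
    rw [hG, FreeAlgebra.lift_ι_apply]; rfl
  have hG1 : G (FreeAlgebra.ι k 1) = q•Y - a•T := by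
    rw [hG, FreeAlgebra.lift_ι_apply]; rfl
  have hG2 : G (FreeAlgebra.ι k 2) = T := by
    rw [hG, FreeAlgebra.lift_ι_apply]; rfl
  have hFrel : ∀ ⦃u v⦄, R u v → F u = F v := by
    rintro u v (⟨rfl, rfl⟩ | ⟨rfl, rfl⟩ | ⟨rfl, rfl⟩) <;>
      simp only [map_add, map_sub, map_smul, map_mul, map_zero, hF0, hF1, hF2]
    · exact stmt7_key1 q a b c hq0 X Y T hXT hYT hr
    · exact stmt7_comm1' q b X T hXT
    · exact stmt7_comm1 q⁻¹ (q⁻¹*a) Y T hYT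
  have hGrel : ∀ ⦃u v⦄, R u v → G u = G v := by
    rintro u v (⟨rfl, rfl⟩ | ⟨rfl, rfl⟩ | ⟨rfl, rfl⟩) <;>
      simp only [map_add, map_sub, map_smul, map_mul, map_zero, hG0, hG1, hG2]
    · exact stmt7_key2 q a b c hq0 X Y T hXT hYT hr
    · exact stmt7_comm1 q⁻¹ (q⁻¹*b) X T hXT
    · exact stmt7_comm1' q a Y T hYT
  set φ₀ : RingQuot R →ₐ[k] RingQuot R := RingQuot.liftAlgHom k ⟨F, hFrel⟩ with hφ₀
  set ψ₀ : RingQuot R →ₐ[k] RingQuot R := RingQuot.liftAlgHom k ⟨G, hGrel⟩ with hψ₀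
  have hφX : φ₀ X = q•X - b•T := by
    rw [hX, hmk, hφ₀, RingQuot.liftAlgHom_mkAlgHom_apply]; exact hF0
  have hφY : φ₀ Y = q⁻¹•Y + (q⁻¹*a)•T := by
    rw [hY, hmk, hφ₀, RingQuot.liftAlgHom_mkAlgHom_apply]; exact hF1
  have hφT : φ₀ T = T := by
    rw [hT, hmk, hφ₀, RingQuot.liftAlgHom_mkAlgHom_apply]; exact hF2
  have hψX : ψ₀ X = q⁻¹•X + (q⁻¹*b)•T := by
    rw [hX, hmk, hψ₀, RingQuot.liftAlgHom_mkAlgHom_apply]; exact hG0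
  have hψY : ψ₀ Y = q•Y - a•T := by
    rw [hY, hmk, hψ₀, RingQuot.liftAlgHom_mkAlgHom_apply]; exact hG1
  have hψT : ψ₀ T = T := by
    rw [hT, hmk, hψ₀, RingQuot.liftAlgHom_mkAlgHom_apply]; exact hG2
  have key1 : ∀ i : Fin 3, φ₀ (ψ₀ (mk (FreeAlgebra.ι k i))) = mk (FreeAlgebra.ι k i) := by
    intro i
    fin_cases i
    · show φ₀ (ψ₀ X) = X
      rw [hψX, map_add, map_smul, map_smul, hφX, hφT]
      match_scalars <;> field_simp <;> ring
    · show φ₀ (ψ₀ Y) = Y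
      rw [hψY, map_sub, map_smul, map_smul, hφY, hφT]
      match_scalars <;> field_simp <;> ring
    · show φ₀ (ψ₀ T) = T
      rw [hψT, hφT]
  have key2 : ∀ i : Fin 3, ψ₀ (φ₀ (mk (FreeAlgebra.ι k i))) = mk (FreeAlgebra.ι k i) := by
    intro i
    fin_cases i
    · show ψ₀ (φ₀ X) = X
      rw [hφX, map_sub, map_smul, map_smul, hψX, hψT]
      match_scalars <;> field_simp <;> ring
    · show ψ₀ (φ₀ Y) = Y
      rw [hφY, map_add, map_smul, map_smul, hψY, hψT]
      match_scalars <;> field_simp <;> ring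
    · show ψ₀ (φ₀ T) = T
      rw [hφT, hψT]
  have hcomp1 : φ₀.comp ψ₀ = AlgHom.id k (RingQuot R) := by
    apply RingQuot.ringQuot_ext'
    apply FreeAlgebra.hom_ext
    funext i
    simpa only [Function.comp_apply, AlgHom.comp_apply, AlgHom.id_apply] using key1 i
  have hcomp2 : ψ₀.comp φ₀ = AlgHom.id k (RingQuot R) := by
    apply RingQuot.ringQuot_ext'
    apply FreeAlgebra.hom_ext
    funext i
    simpa only [Function.comp_apply, AlgHom.comp_apply, AlgHom.id_apply] using key2 i
  set φ : RingQuot R ≃ₐ[k] RingQuot R := AlgEquiv.ofAlgHom φ₀ ψ₀ hcomp1 hcomp2 with hφ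
  -- degree-1 piece
  set M : Submodule k (RingQuot R) :=
    Submodule.map mk.toLinearMap
      (Submodule.span k (Set.range (FreeAlgebra.ι k : Fin 3 → FreeAlgebra k (Fin 3)))) with hM
  have hMX : X ∈ M := ⟨FreeAlgebra.ι k 0, Submodule.subset_span (Set.mem_range_self _), rfl⟩
  have hMY : Y ∈ M := ⟨FreeAlgebra.ι k 1, Submodule.subset_span (Set.mem_range_self _), rfl⟩
  have hMT : T ∈ M := ⟨FreeAlgebra.ι k 2, Submodule.subset_span (Set.mem_range_self _), rfl⟩
  have hpiece : ∀ n, qPlaneHomogPiece k q a b c n = M ^ n := by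
    intro n
    show Submodule.map mk.toLinearMap _ = _
    rw [Submodule.map_pow]
  have powmono : ∀ (P Q : Submodule k (RingQuot R)), P ≤ Q → ∀ n, P^n ≤ Q^n := by
    intro P Q h n
    induction n with
    | zero => simp
    | succ n ih => rw [pow_succ, pow_succ]; exact mul_le_mul' ih h
  have grad : ∀ g : RingQuot R →ₐ[k] RingQuot R, g X ∈ M → g Y ∈ M → g T ∈ M →
      ∀ n, Submodule.map g.toLinearMap (qPlaneHomogPiece k q a b c n) ≤
        qPlaneHomogPiece k q a b c n := by
    intro g hgX hgY hgT n
    rw [hpiece n, Submodule.map_pow]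
    refine powmono _ _ ?_ n
    rw [hM, ← Submodule.map_comp, ← AlgHom.comp_toLinearMap, Submodule.map_span,
      Submodule.span_le]
    rintro z ⟨w, ⟨i, rfl⟩, rfl⟩
    fin_cases i
    · exact hgX
    · exact hgY
    · exact hgT
  refine ⟨φ, hφX, hφY, hφT, ?_, ?_⟩
  · have : φ.toLinearMap = φ₀.toLinearMap := rfl
    rw [this]
    refine grad φ₀ ?_ ?_ ?_
    · rw [hφX]; exact Submodule.sub_mem M (Submodule.smul_mem M q hMX) (Submodule.smul_mem M b hMT)
    · rw [hφY]; exact Submodule.add_mem M (Submodule.smul_mem M _ hMY) (Submodule.smul_mem M _ hMT)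
    · rw [hφT]; exact hMT
  · have : φ.symm.toLinearMap = ψ₀.toLinearMap := rfl
    rw [this]
    refine grad ψ₀ ?_ ?_ ?_
    · rw [hψX]; exact Submodule.add_mem M (Submodule.smul_mem M _ hMX) (Submodule.smul_mem M _ hMT)
    · rw [hψY]; exact Submodule.sub_mem M (Submodule.smul_mem M q hMY) (Submodule.smul_mem M a hMT)
    · rw [hψT]; exact hMT
end

section
/- In the algebra 𝔅 = k⟨x₁,x₂⟩/(x₁²x₂ − x₂x₁² − x₂x₁x₂ + x₂²x₁, x₁x₂² − x₂²x₁), the element z = x₁x₂ − x₂x₁ is normal (i.e., z𝔅 = 𝔅z), and 𝔅/(z) is isomorphic to the polynomial ring k[x₁,x₂]. -/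
/-- The defining relations of the algebra `𝔅`:
`x₁²x₂ − x₂x₁² − x₂x₁x₂ + x₂²x₁ = 0` and `x₁x₂² − x₂²x₁ = 0`. -/
def frakBRel (k : Type*) [Field k] :
    FreeAlgebra k (Fin 2) → FreeAlgebra k (Fin 2) → Prop := fun u v =>
  (u = FreeAlgebra.ι k 0 * FreeAlgebra.ι k 0 * FreeAlgebra.ι k 1 -
        FreeAlgebra.ι k 1 * FreeAlgebra.ι k 0 * FreeAlgebra.ι k 0 -
        FreeAlgebra.ι k 1 * FreeAlgebra.ι k 0 * FreeAlgebra.ι k 1 +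
        FreeAlgebra.ι k 1 * FreeAlgebra.ι k 1 * FreeAlgebra.ι k 0 ∧ v = 0) ∨
  (u = FreeAlgebra.ι k 0 * FreeAlgebra.ι k 1 * FreeAlgebra.ι k 1 -
        FreeAlgebra.ι k 1 * FreeAlgebra.ι k 1 * FreeAlgebra.ι k 0 ∧ v = 0)

/-- The algebra `𝔅 = k⟨x₁,x₂⟩/(x₁²x₂ − x₂x₁² − x₂x₁x₂ + x₂²x₁, x₁x₂² − x₂²x₁)`. -/
abbrev FrakB (k : Type*) [Field k] := RingQuot (frakBRel k)

/-- The image of `z = x₁x₂ − x₂x₁` in `𝔅`. -/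
noncomputable def frakBz (k : Type*) [Field k] : FrakB k :=
  RingQuot.mkAlgHom k (frakBRel k)
    (FreeAlgebra.ι k 0 * FreeAlgebra.ι k 1 - FreeAlgebra.ι k 1 * FreeAlgebra.ι k 0)

/-- The relation killing `z` in `𝔅`, defining the quotient `𝔅/(z)`. -/
def frakBzRel (k : Type*) [Field k] : FrakB k → FrakB k → Prop := fun u v =>
  u = frakBz k ∧ v = 0

section Aux
variable (k : Type*) [Field k]

local notation "fa" => FreeAlgebra.ι k (0 : Fin 2)
local notation "fb" => FreeAlgebra.ι k (1 : Fin 2)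

def fr1 : FreeAlgebra k (Fin 2) := fa * fa * fb - fb * fa * fa - fb * fa * fb + fb * fb * fa
def fr2 : FreeAlgebra k (Fin 2) := fa * fb * fb - fb * fb * fa

noncomputable def bgA : FrakB k := RingQuot.mkAlgHom k (frakBRel k) fa
noncomputable def bgB : FrakB k := RingQuot.mkAlgHom k (frakBRel k) fb

lemma mk_fr1 : RingQuot.mkAlgHom k (frakBRel k) (fr1 k) = 0 := by
  have h := RingQuot.mkAlgHom_rel k (s := frakBRel k) (Or.inl ⟨rfl, rfl⟩)
  rw [map_zero] at h
  exact h
lemma mk_fr2 : RingQuot.mkAlgHom k (frakBRel k) (fr2 k) = 0 := by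
  have h := RingQuot.mkAlgHom_rel k (s := frakBRel k) (Or.inr ⟨rfl, rfl⟩)
  rw [map_zero] at h
  exact h

lemma z_mul_A : frakBz k * bgA k = (bgB k - bgA k) * frakBz k := by
  have key : (fa * fb - fb * fa) * fa = (fb - fa) * (fa * fb - fb * fa) + fr1 k := by
    rw [fr1]
    simp only [sub_mul, mul_sub, add_mul, mul_add, neg_mul, mul_neg, neg_add, neg_neg, neg_sub,
      sub_eq_add_neg, mul_assoc]
    abel
  calc frakBz k * bgA k
      = RingQuot.mkAlgHom k (frakBRel k) ((fa * fb - fb * fa) * fa) := (map_mul _ _ _).symm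
    _ = RingQuot.mkAlgHom k (frakBRel k) ((fb - fa) * (fa * fb - fb * fa))
          + RingQuot.mkAlgHom k (frakBRel k) (fr1 k) := by rw [key, map_add]
    _ = (bgB k - bgA k) * frakBz k := by
          rw [mk_fr1, add_zero, map_mul, map_sub]; rfl

lemma z_mul_B : frakBz k * bgB k = (-bgB k) * frakBz k := by
  have key : (fa * fb - fb * fa) * fb = (-fb) * (fa * fb - fb * fa) + fr2 k := by
    rw [fr2]
    simp only [sub_mul, mul_sub, add_mul, mul_add, neg_mul, mul_neg, neg_add, neg_neg, neg_sub,
      sub_eq_add_neg, mul_assoc]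
    abel
  calc frakBz k * bgB k
      = RingQuot.mkAlgHom k (frakBRel k) ((fa * fb - fb * fa) * fb) := (map_mul _ _ _).symm
    _ = RingQuot.mkAlgHom k (frakBRel k) ((-fb) * (fa * fb - fb * fa))
          + RingQuot.mkAlgHom k (frakBRel k) (fr2 k) := by rw [key, map_add]
    _ = (-bgB k) * frakBz k := by
          rw [mk_fr2, add_zero, map_mul, map_neg]; rfl

lemma A_mul_z : bgA k * frakBz k = frakBz k * (-(bgA k + bgB k)) := by
  have key : fa * (fa * fb - fb * fa) = (fa * fb - fb * fa) * (-(fa + fb)) + (fr1 k + fr2 k) := by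
    rw [fr1, fr2]
    simp only [sub_mul, mul_sub, add_mul, mul_add, neg_mul, mul_neg, neg_add, neg_neg, neg_sub,
      sub_eq_add_neg, mul_assoc]
    abel
  calc bgA k * frakBz k
      = RingQuot.mkAlgHom k (frakBRel k) (fa * (fa * fb - fb * fa)) := (map_mul _ _ _).symm
    _ = RingQuot.mkAlgHom k (frakBRel k) ((fa * fb - fb * fa) * (-(fa + fb)))
          + (RingQuot.mkAlgHom k (frakBRel k) (fr1 k)
            + RingQuot.mkAlgHom k (frakBRel k) (fr2 k)) := by rw [key, map_add, map_add]
    _ = frakBz k * (-(bgA k + bgB k)) := by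
          rw [mk_fr1, mk_fr2, add_zero, add_zero, map_mul, map_neg, map_add]; rfl

lemma B_mul_z : bgB k * frakBz k = frakBz k * (-bgB k) := by
  have key : fb * (fa * fb - fb * fa) = (fa * fb - fb * fa) * (-fb) + fr2 k := by
    rw [fr2]
    simp only [sub_mul, mul_sub, add_mul, mul_add, neg_mul, mul_neg, neg_add, neg_neg, neg_sub,
      sub_eq_add_neg, mul_assoc]
    abel
  calc bgB k * frakBz k
      = RingQuot.mkAlgHom k (frakBRel k) (fb * (fa * fb - fb * fa)) := (map_mul _ _ _).symm
    _ = RingQuot.mkAlgHom k (frakBRel k) ((fa * fb - fb * fa) * (-fb))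
          + RingQuot.mkAlgHom k (frakBRel k) (fr2 k) := by rw [key, map_add]
    _ = frakBz k * (-bgB k) := by
          rw [mk_fr2, add_zero, map_mul, map_neg]; rfl

lemma normal_left : ∀ b : FrakB k, ∃ c : FrakB k, frakBz k * b = c * frakBz k := by
  intro b
  obtain ⟨x, rfl⟩ := RingQuot.mkAlgHom_surjective k (frakBRel k) b
  induction x with
  | grade0 r =>
      exact ⟨algebraMap k _ r, by rw [AlgHom.commutes, Algebra.commutes]⟩
  | grade1 i =>
      fin_cases i
      · exact ⟨bgB k - bgA k, z_mul_A k⟩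
      · exact ⟨-bgB k, z_mul_B k⟩
  | mul u v hu hv =>
      obtain ⟨cu, hcu⟩ := hu
      obtain ⟨cv, hcv⟩ := hv
      refine ⟨cu * cv, ?_⟩
      rw [map_mul, ← mul_assoc, hcu, mul_assoc, hcv, ← mul_assoc]
  | add u v hu hv =>
      obtain ⟨cu, hcu⟩ := hu
      obtain ⟨cv, hcv⟩ := hv
      exact ⟨cu + cv, by rw [map_add, mul_add, hcu, hcv, add_mul]⟩

lemma normal_right : ∀ b : FrakB k, ∃ c : FrakB k, b * frakBz k = frakBz k * c := by
  intro b
  obtain ⟨x, rfl⟩ := RingQuot.mkAlgHom_surjective k (frakBRel k) b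
  induction x with
  | grade0 r =>
      exact ⟨algebraMap k _ r, by rw [AlgHom.commutes, Algebra.commutes]⟩
  | grade1 i =>
      fin_cases i
      · exact ⟨-(bgA k + bgB k), A_mul_z k⟩
      · exact ⟨-bgB k, B_mul_z k⟩
  | mul u v hu hv =>
      obtain ⟨cu, hcu⟩ := hu
      obtain ⟨cv, hcv⟩ := hv
      refine ⟨cu * cv, ?_⟩
      rw [map_mul, mul_assoc, hcv, ← mul_assoc, hcu, mul_assoc]
  | add u v hu hv =>
      obtain ⟨cu, hcu⟩ := hu
      obtain ⟨cv, hcv⟩ := hv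
      exact ⟨cu + cv, by rw [map_add, add_mul, hcu, hcv, mul_add]⟩

/-! ### The quotient `𝔅/(z)` -/

/-- The composite projection `k⟨x₁,x₂⟩ → 𝔅 → 𝔅/(z)`. -/
noncomputable def bproj : FreeAlgebra k (Fin 2) →ₐ[k] RingQuot (frakBzRel k) :=
  (RingQuot.mkAlgHom k (frakBzRel k)).comp (RingQuot.mkAlgHom k (frakBRel k))

lemma bproj_surjective : Function.Surjective (bproj k) := by
  intro y
  obtain ⟨u, rfl⟩ := RingQuot.mkAlgHom_surjective k (frakBzRel k) y
  obtain ⟨x, rfl⟩ := RingQuot.mkAlgHom_surjective k (frakBRel k) u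
  exact ⟨x, rfl⟩

lemma bproj_comm_gen :
    bproj k fa * bproj k fb = bproj k fb * bproj k fa := by
  have h : RingQuot.mkAlgHom k (frakBzRel k) (frakBz k) = 0 := by
    have := RingQuot.mkAlgHom_rel k (s := frakBzRel k) ⟨rfl, rfl⟩
    rwa [map_zero] at this
  rw [frakBz, map_sub, map_sub] at h
  have h' : bproj k (fa * fb) - bproj k (fb * fa) = 0 := h
  rw [map_mul, map_mul] at h'
  exact sub_eq_zero.mp h'

lemma bproj_gen_comm_all (i : Fin 2) (y : RingQuot (frakBzRel k)) :
    bproj k (FreeAlgebra.ι k i) * y = y * bproj k (FreeAlgebra.ι k i) := by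
  obtain ⟨x, rfl⟩ := bproj_surjective k y
  induction x with
  | grade0 r =>
      rw [AlgHom.commutes]
      exact (Algebra.commutes r _).symm
  | grade1 j =>
      fin_cases i <;> fin_cases j
      · rfl
      · exact bproj_comm_gen k
      · exact (bproj_comm_gen k).symm
      · rfl
  | mul u v hu hv =>
      rw [map_mul, ← mul_assoc, hu, mul_assoc, hv, ← mul_assoc]
  | add u v hu hv =>
      rw [map_add, mul_add, add_mul, hu, hv]

lemma bquot_mul_comm (x y : RingQuot (frakBzRel k)) : x * y = y * x := by
  obtain ⟨u, rfl⟩ := bproj_surjective k x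
  induction u with
  | grade0 r => rw [AlgHom.commutes]; exact Algebra.commutes r y
  | grade1 i => exact bproj_gen_comm_all k i y
  | mul u v hu hv =>
      rw [map_mul, mul_assoc, hv, ← mul_assoc, hu, mul_assoc]
  | add u v hu hv =>
      rw [map_add, add_mul, mul_add, hu, hv]

noncomputable instance : CommRing (RingQuot (frakBzRel k)) :=
  { (inferInstance : Ring (RingQuot (frakBzRel k))) with
    mul_comm := bquot_mul_comm k }

/-- The map `k⟨x₁,x₂⟩ → k[x₁,x₂]`. -/
noncomputable def toPoly : FreeAlgebra k (Fin 2) →ₐ[k] MvPolynomial (Fin 2) k :=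
  FreeAlgebra.lift k (fun i => MvPolynomial.X i)

lemma toPoly_rel : ∀ ⦃x y⦄, frakBRel k x y → toPoly k x = toPoly k y := by
  rintro x y (⟨rfl, rfl⟩ | ⟨rfl, rfl⟩) <;>
    simp only [toPoly, map_sub, map_add, map_mul, map_zero, FreeAlgebra.lift_ι_apply] <;> ring

/-- The induced map `𝔅 → k[x₁,x₂]`. -/
noncomputable def toPoly₁ : FrakB k →ₐ[k] MvPolynomial (Fin 2) k :=
  RingQuot.liftAlgHom k ⟨toPoly k, toPoly_rel k⟩

lemma toPoly₁_rel : ∀ ⦃x y⦄, frakBzRel k x y → toPoly₁ k x = toPoly₁ k y := by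
  rintro x y ⟨rfl, rfl⟩
  rw [map_zero, frakBz, toPoly₁, RingQuot.liftAlgHom_mkAlgHom_apply]
  simp only [toPoly, map_sub, map_mul, FreeAlgebra.lift_ι_apply]
  ring

/-- The induced map `𝔅/(z) → k[x₁,x₂]`. -/
noncomputable def toPoly₂ : RingQuot (frakBzRel k) →ₐ[k] MvPolynomial (Fin 2) k :=
  RingQuot.liftAlgHom k ⟨toPoly₁ k, toPoly₁_rel k⟩

/-- The map `k[x₁,x₂] → 𝔅/(z)`. -/
noncomputable def fromPoly : MvPolynomial (Fin 2) k →ₐ[k] RingQuot (frakBzRel k) :=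
  MvPolynomial.aeval (fun i => bproj k (FreeAlgebra.ι k i))

lemma toPoly₂_bproj (x : FreeAlgebra k (Fin 2)) :
    toPoly₂ k (bproj k x) = toPoly k x := by
  rw [bproj, AlgHom.comp_apply, toPoly₂, RingQuot.liftAlgHom_mkAlgHom_apply,
    toPoly₁, RingQuot.liftAlgHom_mkAlgHom_apply]

lemma comp1 : (toPoly₂ k).comp (fromPoly k) = AlgHom.id k (MvPolynomial (Fin 2) k) := by
  apply MvPolynomial.algHom_ext
  intro i
  rw [AlgHom.comp_apply, AlgHom.id_apply, fromPoly, MvPolynomial.aeval_X, toPoly₂_bproj,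
    toPoly, FreeAlgebra.lift_ι_apply]

lemma comp2 : (fromPoly k).comp (toPoly₂ k) = AlgHom.id k (RingQuot (frakBzRel k)) := by
  suffices h : ((fromPoly k).comp (toPoly₂ k)).comp (bproj k) = bproj k by
    apply AlgHom.ext
    intro y
    obtain ⟨x, rfl⟩ := bproj_surjective k y
    exact AlgHom.congr_fun h x
  apply FreeAlgebra.hom_ext
  funext i
  show fromPoly k (toPoly₂ k (bproj k (FreeAlgebra.ι k i))) = bproj k (FreeAlgebra.ι k i)
  rw [toPoly₂_bproj, toPoly, FreeAlgebra.lift_ι_apply, fromPoly, MvPolynomial.aeval_X]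

end Aux

/-- in `𝔅`, the element `z = x₁x₂ − x₂x₁` is normal (`z𝔅 = 𝔅z`),
and `𝔅/(z)` is isomorphic to the polynomial ring `k[x₁,x₂]`. -/
theorem stmt11 (k : Type*) [Field k] [IsAlgClosed k] [CharZero k] :
    ((∀ b : FrakB k, ∃ c : FrakB k, frakBz k * b = c * frakBz k) ∧
     (∀ b : FrakB k, ∃ c : FrakB k, b * frakBz k = frakBz k * c)) ∧
    Nonempty (RingQuot (frakBzRel k) ≃ₐ[k] MvPolynomial (Fin 2) k) := by
    refine ⟨⟨normal_left k, normal_right k⟩, ⟨AlgEquiv.ofAlgHom (toPoly₂ k) (fromPoly k) (comp1 k) (comp2 k)⟩⟩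
end
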